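/- Independence property of a uniform random H-perfect matching: Let (Ω, Pr) be a probability space, S a finite set, n ≥ 1, and X : Ω → (matrices of size n×n with entries in S) a random matrix. Let H ⊆ S and let α be a probability distribution on H. Assume (1) for every i,j ∈ {1,…,n}, Pr(X_{ij} ∈ H) > 0 and Pr(X_{ij} = x | X_{ij} ∈ H) = α(x) for every x ∈ H; (2) the n row vectors of X are mutually independent random vectors. Let ν = (ν_1,…,ν_n) be a random permutation of {1,…,n}, uniformly distributed over all n! permutations and independent of X. Then Pr(X_{ν_1,1} ∈ H, …, X_{ν_n,n} ∈ H) > 0, and for all subsets A_1,…,A_n ⊆ H it holds that Pr(X_{ν_1,1} ∈ A_1, …, X_{ν_n,n} ∈ A_n | X_{ν_1,1} ∈ H, …, X_{ν_n,n} ∈ H) = ∏_{k=1}^n α(A_k), where α(A_k) = ∑_{x ∈ A_k} α(x). In particular, conditioned on all selected entries falling in H, the values X_{ν_1,1},…,X_{ν_n,n} are mutually independent, each with distribution α. -/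

import Mathlib

open MeasureTheory Finset

/-- Additivity of a measure over a finite partition into sets whose measures sum to the
total mass: each piece is null-measurable, hence any set decomposes additively. -/
lemma partition_measure_aux {Ω : Type*} [MeasurableSpace Ω] (μ : Measure Ω)
    [IsProbabilityMeasure μ] {ι : Type*} [Fintype ι] [DecidableEq ι] (E : ι → Set Ω)
    (hdisj : ∀ i j, i ≠ j → Disjoint (E i) (E j))
    (hcover : (⋃ i, E i) = Set.univ)
    (hsum : ∑ i, μ (E i) = 1) :
    ∀ F : Set Ω, μ F = ∑ i, μ (F ∩ E i) := by
  have hnm : ∀ i, NullMeasurableSet (E i) μ := by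
    intro i
    set B := toMeasurable μ (E i) with hB
    set C := ⋃ j ∈ ({i}ᶜ : Finset ι), toMeasurable μ (E j) with hC
    have hBmeas : MeasurableSet B := measurableSet_toMeasurable μ _
    have hCmeas : MeasurableSet C :=
      Finset.measurableSet_biUnion _ fun j _ => measurableSet_toMeasurable μ _
    have hunion : B ∪ C = Set.univ := by
      rw [Set.eq_univ_iff_forall]
      intro ω
      have hω : ω ∈ ⋃ i, E i := hcover ▸ Set.mem_univ ω
      obtain ⟨j, hj⟩ := Set.mem_iUnion.1 hω
      by_cases h : j = i
      · exact Or.inl (subset_toMeasurable μ _ (h ▸ hj))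
      · exact Or.inr (Set.mem_biUnion (Finset.mem_compl.mpr (by simpa using h)) (subset_toMeasurable μ _ hj))
    have hμC : μ C ≤ ∑ j ∈ ({i}ᶜ : Finset ι), μ (E j) := by
      calc μ C ≤ ∑ j ∈ ({i}ᶜ : Finset ι), μ (toMeasurable μ (E j)) :=
            measure_biUnion_finset_le _ _
        _ = _ := Finset.sum_congr rfl fun j _ => measure_toMeasurable _
    have hsum' : μ (E i) + ∑ j ∈ ({i}ᶜ : Finset ι), μ (E j) = 1 := by
      rw [← hsum]
      rw [← Finset.sum_add_sum_compl {i}]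
      simp
    have hBC : μ (B ∩ C) = 0 := by
      have h1 : μ (B ∪ C) + μ (B ∩ C) = μ B + μ C := measure_union_add_inter B hCmeas
      have h2 : μ B + μ C ≤ 1 := by
        rw [measure_toMeasurable]
        calc μ (E i) + μ C ≤ μ (E i) + ∑ j ∈ ({i}ᶜ : Finset ι), μ (E j) :=
              add_le_add le_rfl hμC
          _ = 1 := hsum'
      rw [hunion, measure_univ] at h1
      have h3 : 1 + μ (B ∩ C) ≤ 1 + 0 := by
        rw [add_zero]; rw [h1]; exact h2
      exact le_antisymm ((ENNReal.add_le_add_iff_left ENNReal.one_ne_top).1 h3) zero_le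
    have hdiff : μ (B \ E i) = 0 := by
      refine measure_mono_null (fun ω hω => ?_) hBC
      obtain ⟨hωB, hωE⟩ := hω
      refine ⟨hωB, ?_⟩
      have : ω ∈ ⋃ j, E j := hcover ▸ Set.mem_univ ω
      obtain ⟨j, hj⟩ := Set.mem_iUnion.1 this
      have hji : j ≠ i := fun h => hωE (h ▸ hj)
      exact Set.mem_biUnion (Finset.mem_compl.mpr (by simpa using hji)) (subset_toMeasurable μ _ hj)
    refine NullMeasurableSet.congr hBmeas.nullMeasurableSet ?_
    rw [Filter.eventuallyEq_set]
    have hae : ∀ᵐ ω ∂μ, ω ∉ B \ E i := measure_eq_zero_iff_ae_notMem.mp hdiff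
    filter_upwards [hae] with ω hω
    constructor
    · intro hωB
      by_contra hωE
      exact hω ⟨hωB, hωE⟩
    · intro hωE
      exact subset_toMeasurable μ _ hωE
  -- now the decomposition, by induction over finsets
  intro F
  have key : ∀ s : Finset ι, μ (F ∩ ⋃ i ∈ s, E i) = ∑ i ∈ s, μ (F ∩ E i) := by
    intro s
    induction s using Finset.induction_on with
    | empty => simp
    | @insert a s ha ih =>
      have hset : (⋃ i ∈ insert a s, E i) = E a ∪ ⋃ i ∈ s, E i := by
        simp [Set.biUnion_insert]
      rw [hset, Finset.sum_insert ha, ← ih]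
      have h1 : μ (F ∩ (E a ∪ ⋃ i ∈ s, E i)) =
          μ ((F ∩ (E a ∪ ⋃ i ∈ s, E i)) ∩ E a) +
            μ ((F ∩ (E a ∪ ⋃ i ∈ s, E i)) \ E a) :=
        (measure_inter_add_diff₀ _ (hnm a)).symm
      have h2 : (F ∩ (E a ∪ ⋃ i ∈ s, E i)) ∩ E a = F ∩ E a := by
        ext ω; constructor
        · rintro ⟨⟨hF, _⟩, hEa⟩; exact ⟨hF, hEa⟩
        · rintro ⟨hF, hEa⟩; exact ⟨⟨hF, Or.inl hEa⟩, hEa⟩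
      have h3 : (F ∩ (E a ∪ ⋃ i ∈ s, E i)) \ E a = F ∩ ⋃ i ∈ s, E i := by
        ext ω; constructor
        · rintro ⟨⟨hF, hU⟩, hEa⟩
          rcases hU with h | h
          · exact absurd h hEa
          · exact ⟨hF, h⟩
        · rintro ⟨hF, hU⟩
          have hωE : ω ∉ E a := by
            obtain ⟨j, hjmem, hj⟩ := Set.mem_iUnion₂.1 hU
            intro hωa
            have hja : j ≠ a := fun h => ha (h ▸ hjmem)
            exact Set.disjoint_left.1 (hdisj j a hja) hj hωa
          exact ⟨⟨hF, Or.inr hU⟩, hωE⟩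
      rw [h1, h2, h3]
  have : μ F = μ (F ∩ ⋃ i ∈ (Finset.univ : Finset ι), E i) := by
    have : (⋃ i ∈ (Finset.univ : Finset ι), E i) = Set.univ := by
      rw [← hcover]; simp
    rw [this, Set.inter_univ]
  rw [this, key]

/-- **Independence property of a uniform random H-perfect matching.**
Let `X : Ω → Fin n → Fin n → S` be a random `n×n` matrix over a finite set `S` which is
`(H,α)`-anchored: every entry lies in `H` with positive probability, the conditional
distribution of every entry given that it lies in `H` is `α`, and the rows of `X` are
mutually independent random vectors.  Let `ν` be a uniformly distributed random
permutation of `{1,…,n}`, independent of `X`.  Then the event that all the selected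
entries `X_{ν_k,k}` lie in `H` has positive probability, and conditioned on this event
the selected values are i.i.d. with distribution `α`: for all `A₁,…,Aₙ ⊆ H`,
`Pr(∀ k, X_{ν_k,k} ∈ A_k | ∀ k, X_{ν_k,k} ∈ H) = ∏ k, α(A_k)`. -/
theorem independence_property_of_uniform_H_perfect_matching
    {Ω : Type*} [MeasurableSpace Ω] (μ : Measure Ω) [IsProbabilityMeasure μ]
    {S : Type*} [Fintype S] [DecidableEq S]
    (n : ℕ) (hn : 1 ≤ n)
    (X : Ω → Fin n → Fin n → S)
    (H : Finset S) (α : S → ℝ)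
    (hα0 : ∀ x, 0 ≤ α x) (hα1 : ∑ x ∈ H, α x = 1)
    -- each entry lies in `H` with positive probability
    (hpos : ∀ i j : Fin n, μ {ω | X ω i j ∈ H} ≠ 0)
    -- conditional distribution of each entry, given that it lies in `H`, is `α`
    (hcond : ∀ i j : Fin n, ∀ x ∈ H,
      μ ({ω | X ω i j = x} ∩ {ω | X ω i j ∈ H}) =
        ENNReal.ofReal (α x) * μ {ω | X ω i j ∈ H})
    -- the rows of `X` are mutually independent random vectors
    (hrows : ∀ A : Fin n → Set (Fin n → S),
      μ {ω | ∀ i, X ω i ∈ A i} = ∏ i, μ {ω | X ω i ∈ A i})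
    -- `ν` is a uniformly distributed random permutation
    (ν : Ω → Equiv.Perm (Fin n))
    (hνunif : ∀ σ : Equiv.Perm (Fin n),
      μ {ω | ν ω = σ} = ((Nat.factorial n : ENNReal))⁻¹)
    -- `ν` is independent of `X`
    (hνindep : ∀ (σ : Equiv.Perm (Fin n)) (B : Set (Fin n → Fin n → S)),
      μ ({ω | ν ω = σ} ∩ {ω | X ω ∈ B}) = μ {ω | ν ω = σ} * μ {ω | X ω ∈ B}) :
    μ {ω | ∀ k, X ω (ν ω k) k ∈ H} ≠ 0 ∧
    ∀ A : Fin n → Finset S, (∀ k, A k ⊆ H) →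
      μ ({ω | ∀ k, X ω (ν ω k) k ∈ A k} ∩ {ω | ∀ k, X ω (ν ω k) k ∈ H}) /
          μ {ω | ∀ k, X ω (ν ω k) k ∈ H} =
        ENNReal.ofReal (∏ k, ∑ x ∈ A k, α x) := by
  classical
  -- the per-entry probability lemma
  have hentry : ∀ (i j : Fin n) (A : Finset S), A ⊆ H →
      μ {ω | X ω i j ∈ A} = ENNReal.ofReal (∑ x ∈ A, α x) * μ {ω | X ω i j ∈ H} := by
    intro i j A hA
    set p := μ {ω | X ω i j ∈ H} with hp
    have hpt : p ≠ ⊤ := measure_ne_top μ _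
    have hfx : ∀ x ∈ H, μ {ω | X ω i j = x} = ENNReal.ofReal (α x) * p := by
      intro x hx
      have heq : {ω | X ω i j = x} ∩ {ω | X ω i j ∈ H} = {ω | X ω i j = x} := by
        apply Set.inter_eq_left.2
        intro ω hω
        simp only [Set.mem_setOf_eq] at hω ⊢
        rw [hω]; exact hx
      rw [← heq]; exact hcond i j x hx
    have hle : ∀ B : Finset S, B ⊆ H →
        μ {ω | X ω i j ∈ B} ≤ ∑ x ∈ B, ENNReal.ofReal (α x) * p := by
      intro B hB
      have hcup : {ω | X ω i j ∈ B} = ⋃ x ∈ B, {ω | X ω i j = x} := by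
        ext ω; simp
      rw [hcup]
      calc μ (⋃ x ∈ B, {ω | X ω i j = x}) ≤ ∑ x ∈ B, μ {ω | X ω i j = x} :=
            measure_biUnion_finset_le _ _
        _ = ∑ x ∈ B, ENNReal.ofReal (α x) * p :=
            Finset.sum_congr rfl fun x hx => hfx x (hB hx)
    have hsumH : ∑ x ∈ H, ENNReal.ofReal (α x) * p = p := by
      rw [← Finset.sum_mul, ← ENNReal.ofReal_sum_of_nonneg (fun x _ => hα0 x), hα1]
      simp
    have hsplit : ∑ x ∈ H \ A, ENNReal.ofReal (α x) * p +
        ∑ x ∈ A, ENNReal.ofReal (α x) * p = p := by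
      rw [Finset.sum_sdiff hA, hsumH]
    have hfin : ∑ x ∈ H \ A, ENNReal.ofReal (α x) * p ≠ ⊤ := by
      intro h
      rw [h] at hsplit
      simp [top_add] at hsplit
      exact hpt hsplit.symm
    have hge : ∑ x ∈ A, ENNReal.ofReal (α x) * p ≤ μ {ω | X ω i j ∈ A} := by
      have hsub : {ω | X ω i j ∈ H} ⊆
          {ω | X ω i j ∈ A} ∪ {ω | X ω i j ∈ H \ A} := by
        intro ω hω
        simp only [Set.mem_setOf_eq] at hω
        by_cases h : X ω i j ∈ A
        · exact Or.inl h
        · exact Or.inr (Finset.mem_sdiff.2 ⟨hω, h⟩)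
      have h1 : p ≤ μ {ω | X ω i j ∈ A} + μ {ω | X ω i j ∈ H \ A} :=
        le_trans (measure_mono hsub) (measure_union_le _ _)
      have h2 : μ {ω | X ω i j ∈ H \ A} ≤ ∑ x ∈ H \ A, ENNReal.ofReal (α x) * p :=
        hle _ (Finset.sdiff_subset)
      have h3 : ∑ x ∈ A, ENNReal.ofReal (α x) * p +
          ∑ x ∈ H \ A, ENNReal.ofReal (α x) * p ≤
          μ {ω | X ω i j ∈ A} + ∑ x ∈ H \ A, ENNReal.ofReal (α x) * p := by
        calc _ = p := by rw [add_comm]; exact hsplit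
          _ ≤ μ {ω | X ω i j ∈ A} + μ {ω | X ω i j ∈ H \ A} := h1
          _ ≤ _ := add_le_add le_rfl h2
      exact (ENNReal.add_le_add_iff_right hfin).1 h3
    have : μ {ω | X ω i j ∈ A} = ∑ x ∈ A, ENNReal.ofReal (α x) * p :=
      le_antisymm (hle A hA) hge
    rw [this, ← Finset.sum_mul, ← ENNReal.ofReal_sum_of_nonneg (fun x _ => hα0 x)]
  -- product over rows for a fixed permutation
  have hrowprod : ∀ (σ : Equiv.Perm (Fin n)) (A : Fin n → Finset S),
      μ {ω | ∀ k, X ω (σ k) k ∈ A k} = ∏ k, μ {ω | X ω (σ k) k ∈ A k} := by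
    intro σ A
    have h := hrows (fun i => {v | v (σ⁻¹ i) ∈ A (σ⁻¹ i)})
    have hset : {ω | ∀ i, X ω i ∈ (fun i => {v : Fin n → S | v (σ⁻¹ i) ∈ A (σ⁻¹ i)}) i} =
        {ω | ∀ k, X ω (σ k) k ∈ A k} := by
      ext ω
      simp only [Set.mem_setOf_eq]
      constructor
      · intro hi k
        have := hi (σ k)
        simpa using this
      · intro hk i
        have := hk (σ⁻¹ i)
        simpa using this
    rw [hset] at h
    rw [h]
    have hterm : ∀ i : Fin n,
        μ {ω | X ω i ∈ (fun i => {v : Fin n → S | v (σ⁻¹ i) ∈ A (σ⁻¹ i)}) i} =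
        (fun k => μ {ω | X ω (σ k) k ∈ A k}) (σ⁻¹ i) := by
      intro i
      simp only [Set.mem_setOf_eq]
      congr 1
      ext ω
      simp [Equiv.apply_symm_apply]
    calc ∏ i, μ {ω | X ω i ∈ (fun i => {v : Fin n → S | v (σ⁻¹ i) ∈ A (σ⁻¹ i)}) i}
        = ∏ i, (fun k => μ {ω | X ω (σ k) k ∈ A k}) (σ⁻¹ i) :=
          Finset.prod_congr rfl fun i _ => hterm i
      _ = ∏ k, μ {ω | X ω (σ k) k ∈ A k} := Equiv.prod_comp σ⁻¹ (fun k => μ {ω | X ω (σ k) k ∈ A k})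
  -- partition over the value of ν
  have hcover : (⋃ σ : Equiv.Perm (Fin n), {ω | ν ω = σ}) = Set.univ := by
    rw [Set.eq_univ_iff_forall]
    intro ω
    exact Set.mem_iUnion.2 ⟨ν ω, rfl⟩
  have hdisj : ∀ σ τ : Equiv.Perm (Fin n), σ ≠ τ →
      Disjoint {ω | ν ω = σ} {ω | ν ω = τ} := by
    intro σ τ hστ
    rw [Set.disjoint_left]
    intro ω h1 h2
    exact hστ (h1.symm.trans h2)
  have hfactne : ((Nat.factorial n : ENNReal)) ≠ 0 := by
    exact_mod_cast Nat.cast_ne_zero.2 (Nat.factorial_ne_zero n)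
  have hfactnetop : ((Nat.factorial n : ENNReal)) ≠ ⊤ := ENNReal.natCast_ne_top _
  have hsum1 : ∑ σ : Equiv.Perm (Fin n), μ {ω | ν ω = σ} = 1 := by
    simp only [hνunif]
    rw [Finset.sum_const, Finset.card_univ, Fintype.card_perm, Fintype.card_fin]
    rw [nsmul_eq_mul]
    rw [ENNReal.mul_inv_cancel hfactne hfactnetop]
  have hpart := partition_measure_aux μ (fun σ : Equiv.Perm (Fin n) => {ω | ν ω = σ})
    hdisj hcover hsum1
  -- the main formula
  have hmatched : ∀ A : Fin n → Finset S, (∀ k, A k ⊆ H) →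
      μ {ω | ∀ k, X ω (ν ω k) k ∈ A k} =
        ENNReal.ofReal (∏ k, ∑ x ∈ A k, α x) *
          ∑ σ : Equiv.Perm (Fin n),
            ((Nat.factorial n : ENNReal))⁻¹ * ∏ k, μ {ω | X ω (σ k) k ∈ H} := by
    intro A hA
    rw [hpart {ω | ∀ k, X ω (ν ω k) k ∈ A k}]
    have hterm : ∀ σ : Equiv.Perm (Fin n),
        μ ({ω | ∀ k, X ω (ν ω k) k ∈ A k} ∩ {ω | ν ω = σ}) =
        ((Nat.factorial n : ENNReal))⁻¹ *
          (ENNReal.ofReal (∏ k, ∑ x ∈ A k, α x) * ∏ k, μ {ω | X ω (σ k) k ∈ H}) := by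
      intro σ
      have hseteq : {ω | ∀ k, X ω (ν ω k) k ∈ A k} ∩ {ω | ν ω = σ} =
          {ω | ν ω = σ} ∩ {ω | X ω ∈ {M : Fin n → Fin n → S | ∀ k, M (σ k) k ∈ A k}} := by
        ext ω
        simp only [Set.mem_inter_iff, Set.mem_setOf_eq]
        constructor
        · rintro ⟨h1, h2⟩
          exact ⟨h2, fun k => h2 ▸ h1 k⟩
        · rintro ⟨h2, h1⟩
          exact ⟨fun k => h2 ▸ h1 k, h2⟩
      rw [hseteq, hνindep σ _, hνunif σ]
      congr 1
      have : {ω | X ω ∈ {M : Fin n → Fin n → S | ∀ k, M (σ k) k ∈ A k}} =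
          {ω | ∀ k, X ω (σ k) k ∈ A k} := rfl
      rw [this, hrowprod σ A]
      have hprodsplit : ∏ k, μ {ω | X ω (σ k) k ∈ A k} =
          ∏ k, (ENNReal.ofReal (∑ x ∈ A k, α x) * μ {ω | X ω (σ k) k ∈ H}) :=
        Finset.prod_congr rfl fun k _ => hentry (σ k) k (A k) (hA k)
      rw [hprodsplit, Finset.prod_mul_distrib,
        ← ENNReal.ofReal_prod_of_nonneg
          (fun k _ => Finset.sum_nonneg fun x _ => hα0 x)]
    calc ∑ σ : Equiv.Perm (Fin n),
          μ ({ω | ∀ k, X ω (ν ω k) k ∈ A k} ∩ {ω | ν ω = σ})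
        = ∑ σ : Equiv.Perm (Fin n), ((Nat.factorial n : ENNReal))⁻¹ *
            (ENNReal.ofReal (∏ k, ∑ x ∈ A k, α x) * ∏ k, μ {ω | X ω (σ k) k ∈ H}) :=
          Finset.sum_congr rfl fun σ _ => hterm σ
      _ = ENNReal.ofReal (∏ k, ∑ x ∈ A k, α x) *
            ∑ σ : Equiv.Perm (Fin n),
              ((Nat.factorial n : ENNReal))⁻¹ * ∏ k, μ {ω | X ω (σ k) k ∈ H} := by
          rw [Finset.mul_sum]
          refine Finset.sum_congr rfl fun σ _ => ?_
          ring
  -- the denominator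
  set D := ∑ σ : Equiv.Perm (Fin n),
    ((Nat.factorial n : ENNReal))⁻¹ * ∏ k, μ {ω | X ω (σ k) k ∈ H} with hD
  have hdenom : μ {ω | ∀ k, X ω (ν ω k) k ∈ H} = D := by
    have := hmatched (fun _ => H) (fun _ => le_refl H)
    simpa [hα1] using this
  have hDne : D ≠ 0 := by
    rw [hD]
    intro h
    rw [Finset.sum_eq_zero_iff] at h
    have h1 := h 1 (Finset.mem_univ 1)
    rcases mul_eq_zero.1 h1 with h2 | h2
    · exact (ENNReal.inv_ne_zero.2 hfactnetop) h2
    · rw [Finset.prod_eq_zero_iff] at h2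
      obtain ⟨k, _, hk⟩ := h2
      exact hpos _ k hk
  have hDnetop : D ≠ ⊤ := by
    rw [← hdenom]
    exact measure_ne_top μ _
  refine ⟨by rw [hdenom]; exact hDne, ?_⟩
  intro A hA
  have hsub : {ω | ∀ k, X ω (ν ω k) k ∈ A k} ⊆ {ω | ∀ k, X ω (ν ω k) k ∈ H} := by
    intro ω hω k
    exact hA k (hω k)
  rw [Set.inter_eq_left.2 hsub, hmatched A hA, hdenom]
  rw [mul_div_assoc, ENNReal.div_self hDne hDnetop, mul_one]
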